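/- Let λ ≠ 0 be real, k > 1, 0 < η < 1, R > 1/η, 0 < P < X. With S₁(α) = Σ_{δX ≤ p ≤ X}(log p)e(pα) over primes and K_η(α) = (sin(πηα)/(πα))², one has ∫_{P/X}^{R} |S₁(λα)|² K_η(α) dα ≪ η X log X. -/

import Mathlib

open Real MeasureTheory
set_option maxHeartbeats 1000000

/-- `e(x) = exp(2πix)` -/
noncomputable def e (x : ℝ) : ℂ := Complex.exp (2 * Real.pi * Complex.I * x)

/-- `S₁(α) = Σ_{δX ≤ p ≤ X} (log p) e(pα)`, sum over primes `p`. -/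
noncomputable def S1 (δ X : ℝ) (α : ℝ) : ℂ :=
  ∑ p ∈ (Finset.Icc 1 (Nat.floor X)).filter
      (fun p : ℕ => p.Prime ∧ δ * X ≤ (p : ℝ) ∧ (p : ℝ) ≤ X),
    (Real.log p : ℂ) * e ((p : ℝ) * α)

/-- `K_η(α) = (sin(πηα)/(πα))²` -/
noncomputable def Keta (η α : ℝ) : ℝ := (Real.sin (Real.pi * η * α) / (Real.pi * α)) ^ 2

lemma integral_e_int (m : ℤ) (hm : m ≠ 0) (a : ℝ) :
    ∫ β in a..(a+1), Complex.exp ((2 * Real.pi * Complex.I * m) * β) = 0 := by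
  have hc : (2 * Real.pi * Complex.I * m : ℂ) ≠ 0 := by
    simp [Real.pi_ne_zero, Complex.I_ne_zero, Complex.ofReal_ne_zero, hm]
  rw [integral_exp_mul_complex hc]
  have : Complex.exp (2 * Real.pi * Complex.I * m * ((a:ℝ)+1:ℝ))
      = Complex.exp (2 * Real.pi * Complex.I * m * a) := by
    rw [show ((2 * Real.pi * Complex.I * m * (((a:ℝ)+1:ℝ):ℂ)) : ℂ) = 2 * Real.pi * Complex.I * m * a
        + m * (2 * Real.pi * Complex.I) by push_cast; ring, Complex.exp_add,
      Complex.exp_int_mul_two_pi_mul_I, mul_one]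
  rw [this]; simp

lemma e_mul_conj (p q : ℕ) (β : ℝ) :
    e (p * β) * (starRingEnd ℂ) (e (q * β))
      = Complex.exp ((2 * Real.pi * Complex.I * ((p:ℤ) - q)) * β) := by
  simp only [e, ← Complex.exp_conj, ← Complex.exp_add]
  congr 1
  have : (starRingEnd ℂ) (2 * Real.pi * Complex.I * (((q:ℝ) * β : ℝ) : ℂ))
      = -(2 * Real.pi * Complex.I * (((q:ℝ) * β : ℝ) : ℂ)) := by
    rw [map_mul, map_mul, map_mul, Complex.conj_I, Complex.conj_ofReal, Complex.conj_ofReal, map_ofNat]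
    push_cast; ring
  rw [this]; push_cast; ring

lemma integral_cross (a : ℝ) (p q : ℕ) :
    ∫ β in a..(a+1), e ((p:ℝ) * β) * (starRingEnd ℂ) (e ((q:ℝ) * β))
      = if p = q then 1 else 0 := by
  simp only [e_mul_conj]
  by_cases h : p = q
  · subst h; simp
  · rw [if_neg h]
    have h2 : ∀ β : ℝ, (2 * (Real.pi:ℂ) * Complex.I * (((p:ℤ):ℂ) - ((q:ℕ):ℂ))) * (β:ℂ)
        = (2 * (Real.pi:ℂ) * Complex.I * ((((p:ℤ) - (q:ℤ)):ℤ):ℂ)) * (β:ℂ) := fun β => by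
      push_cast; ring
    simp_rw [h2]
    exact integral_e_int _ (sub_ne_zero.mpr (by exact_mod_cast h)) a

lemma cont_e (c : ℝ) : Continuous fun β : ℝ => e (c * β) := by
  unfold e
  fun_prop

lemma S1_continuous (δ X : ℝ) : Continuous fun β : ℝ => S1 δ X β := by
  unfold S1
  exact continuous_finset_sum _ fun p _ => continuous_const.mul (cont_e p)

noncomputable def crossTerm (p q : ℕ) (β : ℝ) : ℂ :=
  ((Real.log p : ℂ) * (Real.log q : ℂ)) * (e ((p:ℝ)*β) * (starRingEnd ℂ) (e ((q:ℝ)*β)))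

noncomputable def rowSum (F : Finset ℕ) (p : ℕ) (β : ℝ) : ℂ := ∑ q ∈ F, crossTerm p q β

lemma crossTerm_continuous (p q : ℕ) : Continuous (crossTerm p q) := by
  unfold crossTerm
  exact continuous_const.mul ((cont_e p).mul (Complex.continuous_conj.comp (cont_e q)))

lemma crossTerm_integrable (p q : ℕ) (a b : ℝ) :
    IntervalIntegrable (crossTerm p q) volume a b :=
  (crossTerm_continuous p q).intervalIntegrable _ _

lemma rowSum_continuous (F : Finset ℕ) (p : ℕ) : Continuous (rowSum F p) := by
  unfold rowSum
  exact continuous_finset_sum _ fun q _ => crossTerm_continuous p q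

lemma rowSum_integrable (F : Finset ℕ) (p : ℕ) (a b : ℝ) :
    IntervalIntegrable (rowSum F p) volume a b :=
  (rowSum_continuous F p).intervalIntegrable _ _

lemma integral_rowSum (F : Finset ℕ) (p : ℕ) (hp : p ∈ F) (a : ℝ) :
    ∫ β in a..(a+1), rowSum F p β = (((Real.log p)^2 : ℝ) : ℂ) := by
  unfold rowSum
  rw [intervalIntegral.integral_finset_sum (fun q _ => crossTerm_integrable p q a (a+1))]
  have h3 : ∀ q ∈ F, (∫ β in a..(a+1), crossTerm p q β)
      = ((Real.log p : ℂ) * (Real.log q : ℂ)) * (if p = q then 1 else 0) := by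
    intro q _
    unfold crossTerm
    rw [intervalIntegral.integral_const_mul, integral_cross]
  rw [Finset.sum_congr rfl h3]
  simp only [mul_ite, mul_one, mul_zero]
  rw [Finset.sum_ite_eq F p (fun q => (Real.log p : ℂ) * (Real.log q : ℂ)), if_pos hp]
  push_cast; ring

lemma S1_meanvalue (δ X a : ℝ) :
    (∫ β in a..(a+1), ‖S1 δ X β‖^2)
      = ∑ p ∈ (Finset.Icc 1 (Nat.floor X)).filter
          (fun p : ℕ => p.Prime ∧ δ * X ≤ (p : ℝ) ∧ (p : ℝ) ≤ X), (Real.log p)^2 := by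
  set F := (Finset.Icc 1 (Nat.floor X)).filter
      (fun p : ℕ => p.Prime ∧ δ * X ≤ (p : ℝ) ∧ (p : ℝ) ≤ X) with hF
  have expand : ∀ β : ℝ, ((‖S1 δ X β‖^2 : ℝ) : ℂ) = ∑ p ∈ F, rowSum F p β := by
    intro β
    have h1 : ((‖S1 δ X β‖^2 : ℝ) : ℂ) = S1 δ X β * (starRingEnd ℂ) (S1 δ X β) := by
      rw [Complex.mul_conj, Complex.normSq_eq_norm_sq]
    rw [h1]
    unfold S1 rowSum crossTerm
    rw [map_sum, Finset.sum_mul_sum]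
    refine Finset.sum_congr rfl fun p _ => Finset.sum_congr rfl fun q _ => ?_
    rw [map_mul, Complex.conj_ofReal]
    ring
  have key : (∫ β in a..(a+1), ((‖S1 δ X β‖^2 : ℝ) : ℂ))
      = ((∑ p ∈ F, (Real.log p)^2 : ℝ) : ℂ) := by
    rw [intervalIntegral.integral_congr (g := fun β => ∑ p ∈ F, rowSum F p β)
        (fun β _ => expand β)]
    rw [intervalIntegral.integral_finset_sum (fun p _ => rowSum_integrable F p a (a+1))]
    rw [Finset.sum_congr rfl (fun p hp => integral_rowSum F p hp a)]
    push_cast; ring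
  rw [intervalIntegral.integral_ofReal] at key
  exact_mod_cast key

lemma Keta_nonneg (η α : ℝ) : 0 ≤ Keta η α := sq_nonneg _

lemma Keta_le_sq {η : ℝ} (hη : 0 ≤ η) (α : ℝ) : Keta η α ≤ η^2 := by
  unfold Keta
  rcases eq_or_ne α 0 with h | h
  · simp [h]; positivity
  · have hπα : (Real.pi * α) ^ 2 > 0 := by positivity
    rw [div_pow, div_le_iff₀ hπα]
    calc Real.sin (Real.pi * η * α) ^ 2 ≤ (Real.pi * η * α) ^ 2 := Real.sin_sq_le_sq
      _ = η ^ 2 * (Real.pi * α) ^ 2 := by ring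

lemma Keta_le_inv (η α : ℝ) (h : α ≠ 0) : Keta η α ≤ 1 / (Real.pi * α) ^ 2 := by
  unfold Keta
  have hπα : (Real.pi * α) ^ 2 > 0 := by positivity
  rw [div_pow, div_le_div_iff₀ hπα hπα]
  have h1 : Real.sin (Real.pi * η * α) ^ 2 ≤ 1 := Real.sin_sq_le_one _
  nlinarith [sq_nonneg (Real.pi * α)]

lemma sum_log_sq_le (δ X : ℝ) (hX : 2 ≤ X) :
    ∑ p ∈ (Finset.Icc 1 (Nat.floor X)).filter
        (fun p : ℕ => p.Prime ∧ δ * X ≤ (p : ℝ) ∧ (p : ℝ) ≤ X), (Real.log p)^2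
      ≤ Real.log 4 * X * Real.log X := by
  set F := (Finset.Icc 1 (Nat.floor X)).filter
      (fun p : ℕ => p.Prime ∧ δ * X ≤ (p : ℝ) ∧ (p : ℝ) ≤ X) with hF
  set n := Nat.floor X with hn
  set F' := (Finset.range (n + 1)).filter Nat.Prime with hF'
  have hX0 : (0:ℝ) ≤ X := by linarith
  have hlogX : 0 ≤ Real.log X := Real.log_nonneg (by linarith)
  have hlog4 : 0 ≤ Real.log 4 := Real.log_nonneg (by norm_num)
  have hsub : F ⊆ F' := by
    intro p hp
    rw [hF, Finset.mem_filter, Finset.mem_Icc] at hp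
    rw [hF', Finset.mem_filter, Finset.mem_range]
    exact ⟨Nat.lt_succ_of_le hp.1.2, hp.2.1⟩
  have hlogp_nonneg : ∀ p ∈ F', 0 ≤ Real.log (p:ℝ) := by
    intro p hp
    rw [hF', Finset.mem_filter] at hp
    exact Real.log_nonneg (by exact_mod_cast hp.2.one_lt.le)
  have step1 : ∀ p ∈ F, (Real.log p)^2 ≤ Real.log X * Real.log p := by
    intro p hp
    have hp' := hp
    rw [hF, Finset.mem_filter] at hp'
    have h0 : 0 ≤ Real.log (p:ℝ) := hlogp_nonneg p (hsub hp)
    have h1 : Real.log (p:ℝ) ≤ Real.log X := by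
      apply Real.log_le_log (by exact_mod_cast hp'.2.1.pos) hp'.2.2.2
    calc (Real.log p)^2 = Real.log p * Real.log p := sq (Real.log p) ▸ by ring
      _ ≤ Real.log X * Real.log p := mul_le_mul_of_nonneg_right h1 h0
  have step2 : ∑ p ∈ F', Real.log (p:ℝ) ≤ X * Real.log 4 := by
    have hne : ∀ p ∈ F', ((p:ℝ)) ≠ 0 := by
      intro p hp
      exact_mod_cast (Finset.mem_filter.mp hp).2.pos.ne'
    have hprod : ∑ p ∈ F', Real.log (p:ℝ) = Real.log ((primorial n : ℕ) : ℝ) := by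
      rw [← Real.log_prod (s := F') (f := fun p : ℕ => (p:ℝ)) hne]
      congr 1
      rw [← Nat.cast_prod]
      norm_num [primorial, hF']
    rw [hprod]
    have h4 : ((primorial n : ℕ) : ℝ) ≤ ((4:ℕ):ℝ) ^ n := by
      exact_mod_cast primorial_le_4_pow n
    calc Real.log ((primorial n : ℕ) : ℝ) ≤ Real.log (((4:ℕ):ℝ) ^ n) := by
          apply Real.log_le_log (by exact_mod_cast primorial_pos n) h4
      _ = n * Real.log ((4:ℕ):ℝ) := Real.log_pow _ n
      _ ≤ X * Real.log 4 := by
          push_cast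
          exact mul_le_mul_of_nonneg_right (Nat.floor_le hX0) hlog4
  calc ∑ p ∈ F, (Real.log p)^2 ≤ ∑ p ∈ F, Real.log X * Real.log p :=
        Finset.sum_le_sum step1
    _ = Real.log X * ∑ p ∈ F, Real.log (p:ℝ) := by rw [Finset.mul_sum]
    _ ≤ Real.log X * ∑ p ∈ F', Real.log (p:ℝ) := by
        apply mul_le_mul_of_nonneg_left _ hlogX
        exact Finset.sum_le_sum_of_subset_of_nonneg hsub (fun p hp _ => hlogp_nonneg p hp)
    _ ≤ Real.log X * (X * Real.log 4) := mul_le_mul_of_nonneg_left step2 hlogX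
    _ = Real.log 4 * X * Real.log X := by ring

lemma conj_e (x : ℝ) : (starRingEnd ℂ) (e x) = e (-x) := by
  unfold e
  rw [← Complex.exp_conj]
  congr 1
  rw [map_mul, map_mul, map_mul, Complex.conj_I, Complex.conj_ofReal, map_ofNat,
    Complex.conj_ofReal]
  push_cast; ring

lemma norm_S1_neg (δ X x : ℝ) : ‖S1 δ X (-x)‖ = ‖S1 δ X x‖ := by
  have h : S1 δ X (-x) = (starRingEnd ℂ) (S1 δ X x) := by
    unfold S1
    rw [map_sum]
    refine Finset.sum_congr rfl fun p _ => ?_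
    rw [map_mul, Complex.conj_ofReal, conj_e]
    congr 1
    rw [show -((p:ℝ) * x) = (p:ℝ) * (-x) by ring]
  rw [h, RCLike.norm_conj]

theorem S1_sq_Keta_bound (δ : ℝ) (hδ0 : 0 < δ) (hδ1 : δ < 1) (l : ℝ) (hl : l ≠ 0)
    (k : ℝ) (hk : 1 < k) :
    ∃ C > 0, ∀ X ≥ (2 : ℝ), ∀ η : ℝ, 0 < η → η < 1 → ∀ R > 1 / η, ∀ P : ℝ, 0 < P → P < X →
      ∫ α in (P / X)..R, ‖S1 δ X (l * α)‖ ^ 2 * Keta η α ≤ C * η * X * Real.log X := by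
  set L := |l| with hLdef
  have hL0 : 0 < L := abs_pos.mpr hl
  have hlog4 : 0 < Real.log 4 := Real.log_pos (by norm_num)
  refine ⟨(2 + L^2) * Real.log 4 / L, by positivity, ?_⟩
  intro X hX η hη0 hη1 R hR P hP0 hPX
  have hX0 : (0:ℝ) < X := by linarith
  have hlogX : 0 ≤ Real.log X := Real.log_nonneg (by linarith)
  have hinvη : 1 < 1/η := by rw [lt_div_iff₀ hη0]; linarith
  have hR1 : 1 < R := lt_trans hinvη hR
  -- the mean value
  set F := (Finset.Icc 1 (Nat.floor X)).filter
      (fun p : ℕ => p.Prime ∧ δ * X ≤ (p : ℝ) ∧ (p : ℝ) ≤ X) with hF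
  set M := ∑ p ∈ F, (Real.log p)^2 with hM
  have hM0 : 0 ≤ M := Finset.sum_nonneg fun p _ => sq_nonneg _
  have hMle : M ≤ Real.log 4 * X * Real.log X := sum_log_sq_le δ X hX
  -- the function g
  set g : ℝ → ℝ := fun β => ‖S1 δ X β‖^2 * Keta η (β / L) with hg
  have hgnonneg : ∀ β, 0 ≤ g β := fun β =>
    mul_nonneg (sq_nonneg _) (Keta_nonneg _ _)
  have hcontS : Continuous fun β : ℝ => ‖S1 δ X β‖^2 := ((S1_continuous δ X).norm.pow 2)
  have hKmeas : Measurable fun β : ℝ => Keta η (β / L) := by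
    unfold Keta
    measurability
  have hgint : ∀ a b : ℝ, IntervalIntegrable g volume a b := by
    intro a b
    refine IntervalIntegrable.mono_fun
      (((hcontS.mul continuous_const).intervalIntegrable a b :
        IntervalIntegrable (fun β => ‖S1 δ X β‖^2 * η^2) volume a b)) ?_ ?_
    · exact ((hcontS.measurable.mul hKmeas)).aestronglyMeasurable.restrict
    · filter_upwards with β
      rw [Real.norm_eq_abs, Real.norm_eq_abs, abs_of_nonneg (hgnonneg β),
        abs_of_nonneg (show (0:ℝ) ≤ (((fun β => ‖S1 δ X β‖ ^ 2) * fun _ => η ^ 2 : ℝ → ℝ) β) from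
          mul_nonneg (sq_nonneg _) (sq_nonneg _))]
      exact mul_le_mul_of_nonneg_left (Keta_le_sq hη0.le _) (sq_nonneg _)
  -- rewrite the integral via substitution
  have hsub : (∫ α in (P / X)..R, ‖S1 δ X (l * α)‖ ^ 2 * Keta η α)
      = L⁻¹ • ∫ β in (L * (P / X))..(L * R), g β := by
    rw [← intervalIntegral.integral_comp_mul_left g hL0.ne']
    apply intervalIntegral.integral_congr
    intro α _
    show ‖S1 δ X (l * α)‖ ^ 2 * Keta η α = ‖S1 δ X (L * α)‖^2 * Keta η ((L * α) / L)
    rw [mul_div_cancel_left₀ α hL0.ne']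
    rcases abs_cases l with ⟨h1, _⟩ | ⟨h1, _⟩
    · rw [hLdef, h1]
    · rw [hLdef, h1, neg_mul, norm_S1_neg]
  rw [hsub]
  -- extend the integration range
  set n0 := Nat.ceil (1/η) with hn0
  set N := max n0 (Nat.ceil (L * R)) with hN
  have hn0_ge : (1:ℝ)/η ≤ n0 := Nat.le_ceil _
  have hn0_pos : 0 < n0 := by
    have : (0:ℝ) < (n0:ℝ) := lt_of_lt_of_le (by linarith) hn0_ge
    exact_mod_cast this
  have hn0_le : (n0:ℝ) ≤ 2/η := by
    have h1 : (n0:ℝ) < 1/η + 1 := Nat.ceil_lt_add_one (by positivity)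
    have hid : (2:ℝ)/η = 1/η + 1/η := by ring
    linarith
  have hNn0 : n0 ≤ N := le_max_left _ _
  have hext : (∫ β in (L * (P / X))..(L * R), g β) ≤ ∫ β in (0:ℝ)..(N:ℝ), g β := by
    apply intervalIntegral.integral_mono_interval
      (by positivity)
      (by
        apply mul_le_mul_of_nonneg_left _ hL0.le
        have : P / X < 1 := (div_lt_one hX0).mpr hPX
        linarith)
      (le_trans (Nat.le_ceil _) (by exact_mod_cast Nat.cast_le.mpr (le_max_right n0 _)))
      (Filter.Eventually.of_forall hgnonneg)
      (hgint 0 N)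
  -- chop into unit intervals
  have hchop : (∫ β in (0:ℝ)..(N:ℝ), g β)
      = ∑ n ∈ Finset.range N, ∫ β in ((n:ℕ):ℝ)..(((n+1:ℕ)):ℝ), g β := by
    have h := intervalIntegral.sum_integral_adjacent_intervals
      (a := fun n : ℕ => (n:ℝ)) (n := N) (f := g) (μ := volume) (fun k _ => hgint _ _)
    rw [h]
    norm_num
  -- per-interval bounds
  set c : ℕ → ℝ := fun n => if n < n0 then η^2 else L^2 / (Real.pi^2 * (n:ℝ)^2) with hc
  have hper : ∀ n ∈ Finset.range N, (∫ β in ((n:ℕ):ℝ)..(((n+1:ℕ)):ℝ), g β) ≤ c n * M := by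
    intro n _
    rw [show (((n+1:ℕ)):ℝ) = (n:ℝ)+1 by push_cast; ring]
    have hmean := S1_meanvalue δ X (n:ℝ)
    have hcn : 0 ≤ c n := by
      rw [hc]
      dsimp only
      split
      · positivity
      · positivity
    have hbound : ∀ β ∈ Set.Icc ((n:ℝ)) ((n:ℝ)+1), g β ≤ c n * ‖S1 δ X β‖^2 := by
      intro β hβ
      rw [hg, hc]
      dsimp only
      rw [mul_comm (_ : ℝ) (‖S1 δ X β‖^2)]
      apply mul_le_mul_of_nonneg_left _ (sq_nonneg _)
      split
      · exact Keta_le_sq hη0.le _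
      · rename_i hn
        push_neg at hn
        have hn1 : 1 ≤ n := le_trans hn0_pos hn
        have hnR : (1:ℝ) ≤ (n:ℝ) := by exact_mod_cast hn1
        have hβ1 : (n:ℝ) ≤ β := hβ.1
        have hβpos : 0 < β := by linarith
        calc Keta η (β / L) ≤ 1 / (Real.pi * (β / L))^2 :=
              Keta_le_inv η _ (by positivity)
          _ = L^2 / (Real.pi^2 * β^2) := by
              field_simp
          _ ≤ L^2 / (Real.pi^2 * (n:ℝ)^2) := by
              apply div_le_div_of_nonneg_left (by positivity) (by positivity)
              have : (n:ℝ)^2 ≤ β^2 := by nlinarith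
              nlinarith [Real.pi_pos]
    calc (∫ β in ((n:ℝ))..((n:ℝ)+1), g β)
        ≤ ∫ β in ((n:ℝ))..((n:ℝ)+1), c n * ‖S1 δ X β‖^2 := by
          apply intervalIntegral.integral_mono_on (by linarith) (hgint _ _)
            ((continuous_const.mul hcontS).intervalIntegrable _ _) hbound
      _ = c n * ∫ β in ((n:ℝ))..((n:ℝ)+1), ‖S1 δ X β‖^2 :=
          intervalIntegral.integral_const_mul _ _
      _ = c n * M := by rw [hmean]
  -- sum the constants
  have hsum : ∑ n ∈ Finset.range N, c n ≤ (2 + L^2) * η := by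
    rw [Finset.range_eq_Ico, ← Finset.sum_Ico_consecutive _ (Nat.zero_le n0) hNn0]
    have h1 : ∑ n ∈ Finset.Ico 0 n0, c n = n0 * η^2 := by
      rw [← Finset.range_eq_Ico]
      rw [Finset.sum_congr rfl (fun n hn => if_pos (Finset.mem_range.mp hn))]
      rw [Finset.sum_const, Finset.card_range, nsmul_eq_mul]
    have h2 : ∑ n ∈ Finset.Ico n0 N, c n ≤ (L^2/Real.pi^2) * (2 / n0) := by
      have heq : ∀ n ∈ Finset.Ico n0 N, c n = (L^2/Real.pi^2) * ((n:ℝ)^2)⁻¹ := by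
        intro n hn
        rw [hc]
        dsimp only
        rw [if_neg (by simpa using (Finset.mem_Ico.mp hn).1)]
        rw [div_mul_eq_div_div, div_eq_mul_inv]
      rw [Finset.sum_congr rfl heq, ← Finset.mul_sum]
      apply mul_le_mul_of_nonneg_left _ (by positivity)
      have hIco : Finset.Ico n0 N = Finset.Ioo (n0 - 1) N := by
        rw [← Finset.Ico_add_one_left_eq_Ioo, Nat.sub_add_cancel (n := n0) (m := 1) hn0_pos]
      rw [hIco]
      have := sum_Ioo_inv_sq_le (α := ℝ) (n0 - 1) N
      have hcast : ((n0 - 1 : ℕ) : ℝ) + 1 = (n0 : ℝ) := by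
        have : ((n0 - 1 : ℕ) : ℝ) = (n0:ℝ) - 1 := by
          push_cast [Nat.cast_sub hn0_pos]
          ring
        rw [this]; ring
      calc ∑ i ∈ Finset.Ioo (n0-1) N, ((i:ℝ)^2)⁻¹ ≤ 2 / (((n0-1:ℕ):ℝ) + 1) := by
            exact_mod_cast this
        _ = 2 / (n0:ℝ) := by rw [hcast]
    have h3 : (n0:ℝ) * η^2 ≤ 2 * η := by
      calc (n0:ℝ) * η^2 ≤ (2/η) * η^2 := by
            apply mul_le_mul_of_nonneg_right hn0_le (sq_nonneg _)
        _ = 2 * η := by field_simp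
    have h4 : (L^2/Real.pi^2) * (2 / n0) ≤ L^2 * η := by
      have hπ2 : (2:ℝ) ≤ Real.pi^2 := by nlinarith [Real.pi_gt_three]
      have hn0η : 2 / (n0:ℝ) ≤ 2 * η := by
        have h6 : η * (1/η) ≤ η * (n0:ℝ) := mul_le_mul_of_nonneg_left hn0_ge hη0.le
        have h7 : η * (1/η) = 1 := by field_simp
        rw [div_le_iff₀ (by exact_mod_cast hn0_pos : (0:ℝ) < (n0:ℝ))]
        nlinarith
      calc (L^2/Real.pi^2) * (2 / n0) ≤ (L^2/2) * (2*η) := by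
            apply mul_le_mul _ hn0η (by positivity) (by positivity)
            apply div_le_div_of_nonneg_left (sq_nonneg _) (by norm_num) hπ2
        _ = L^2 * η := by ring
    linarith [h1, h2, h3, h4]
  -- put it together
  calc L⁻¹ • ∫ β in (L * (P / X))..(L * R), g β
      ≤ L⁻¹ * ((2 + L^2) * η * M) := by
        rw [smul_eq_mul]
        apply mul_le_mul_of_nonneg_left _ (by positivity)
        calc (∫ β in (L * (P / X))..(L * R), g β) ≤ ∫ β in (0:ℝ)..(N:ℝ), g β := hext
          _ = ∑ n ∈ Finset.range N, ∫ β in ((n:ℕ):ℝ)..(((n+1:ℕ)):ℝ), g β := hchop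
          _ ≤ ∑ n ∈ Finset.range N, c n * M := Finset.sum_le_sum hper
          _ = (∑ n ∈ Finset.range N, c n) * M := by rw [Finset.sum_mul]
          _ ≤ (2 + L^2) * η * M := by
              apply mul_le_mul_of_nonneg_right hsum hM0
    _ ≤ (2 + L^2) * Real.log 4 / L * η * X * Real.log X := by
        calc L⁻¹ * ((2 + L^2) * η * M)
            ≤ L⁻¹ * ((2 + L^2) * η * (Real.log 4 * X * Real.log X)) := by
              apply mul_le_mul_of_nonneg_left _ (by positivity)
              apply mul_le_mul_of_nonneg_left hMle (by positivity)
          _ = (2 + L^2) * Real.log 4 / L * η * X * Real.log X := by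
              field_simp
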